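/- (Uniform smoothing certificate) Let ε₀ be uniform on [a,b]^m (a < b) and ε₁ = α + ε₀ for α ∈ ℝ^m. Let h : X → [0,1]^C be measurable, φ a transform, g^ε(x) = E[h(φ(x,ε))], and suppose g^{ε₀}(x)_{k_A} ≥ p_A ≥ p_B ≥ max_{k ≠ k_A} g^{ε₀}(x)_k. If 1 − (p_A − p_B)/2 < ∏_{i=1}^m max(1 − |α_i|/(b−a), 0), then g^{ε₁}(x)_{k_A} > max_{k ≠ k_A} g^{ε₁}(x)_k. -/

import Mathlib

open MeasureTheory

noncomputable def unifMeas (a b : ℝ) : Measure ℝ :=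
  (ENNReal.ofReal (b - a))⁻¹ • volume.restrict (Set.Icc a b)

lemma my_pi_restrict {ι : Type*} [Fintype ι] {β : ι → Type*} [∀ i, MeasurableSpace (β i)]
    (μ : ∀ i, Measure (β i)) [∀ i, SigmaFinite (μ i)] (s : ∀ i, Set (β i)) :
    Measure.pi (fun i => (μ i).restrict (s i))
      = (Measure.pi μ).restrict (Set.pi Set.univ s) := by
  refine Measure.pi_eq fun t ht => ?_
  rw [Measure.restrict_apply (MeasurableSet.univ_pi ht), ← Set.pi_inter_distrib, Measure.pi_pi]
  exact Finset.prod_congr rfl fun i _ => (Measure.restrict_apply (ht i)).symm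

lemma unif_restrict_eq (a b c d : ℝ) (hac : a ≤ c) (hdb : d ≤ b) :
    (unifMeas a b).restrict (Set.Icc c d)
      = (ENNReal.ofReal (b - a))⁻¹ • volume.restrict (Set.Icc c d) := by
  rw [unifMeas, Measure.restrict_smul, Measure.restrict_restrict measurableSet_Icc,
    Set.inter_eq_self_of_subset_left (Set.Icc_subset_Icc hac hdb)]

lemma map_unif_restrict (a b t c d : ℝ) (hac : a ≤ c) (hdb : d ≤ b)
    (hac' : a ≤ c - t) (hdb' : d - t ≤ b) :
    Measure.map (fun z => t + z) ((unifMeas a b).restrict (Set.Icc (c - t) (d - t)))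
      = (unifMeas a b).restrict (Set.Icc c d) := by
  rw [unif_restrict_eq a b _ _ hac' hdb', unif_restrict_eq a b _ _ hac hdb, Measure.map_smul]
  congr 1
  rw [show Set.Icc (c - t) (d - t) = (fun z => t + z) ⁻¹' Set.Icc c d from
      (Set.preimage_const_add_Icc t c d).symm,
    ← Measure.restrict_map (measurable_const_add t) measurableSet_Icc,
    map_add_left_eq_self volume t]

lemma unif_prob (a b : ℝ) (hab : a < b) : IsProbabilityMeasure (unifMeas a b) := by
  constructor
  rw [unifMeas, Measure.smul_apply, Measure.restrict_apply MeasurableSet.univ,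
    Set.univ_inter, Real.volume_Icc, smul_eq_mul,
    ENNReal.inv_mul_cancel (by simp only [ne_eq, ENNReal.ofReal_eq_zero, not_le]; linarith)
      ENNReal.ofReal_ne_top]

lemma unif_Icc_apply (a b c d : ℝ) (hab : a < b) (hac : a ≤ c) (hdb : d ≤ b) :
    (unifMeas a b) (Set.Icc c d) = (ENNReal.ofReal (b - a))⁻¹ * ENNReal.ofReal (d - c) := by
  rw [unifMeas, Measure.smul_apply, Measure.restrict_apply measurableSet_Icc,
    Set.inter_eq_self_of_subset_left (Set.Icc_subset_Icc hac hdb), Real.volume_Icc, smul_eq_mul]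

/-- uniform smoothing certificate. -/
theorem stmt_7 {X : Type*} [MeasurableSpace X] {m C : ℕ} (hC : 2 ≤ C)
    (a b : ℝ) (hab : a < b)
    (h : X → Fin C → ℝ) (hhb : ∀ y k, h y k ∈ Set.Icc (0 : ℝ) 1)
    (φ : X → (Fin m → ℝ) → X) (x : X) (α : Fin m → ℝ)
    (P : Measure (Fin m → ℝ))
    (hP : P = Measure.pi fun _ : Fin m => unifMeas a b)
    (hmeas : ∀ k, Measurable fun z : Fin m → ℝ => h (φ x z) k)
    (g₀ g₁ : Fin C → ℝ)
    (hg₀ : g₀ = fun k => ∫ z, h (φ x z) k ∂P)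
    (hg₁ : g₁ = fun k => ∫ z, h (φ x (α + z)) k ∂P)
    (kA : Fin C) (pA pB : ℝ)
    (hpB0 : 0 ≤ pB) (hpA1 : pA ≤ 1) (hAB : pB ≤ pA)
    (hconfA : pA ≤ g₀ kA) (hconfB : ∀ k, k ≠ kA → g₀ k ≤ pB)
    (hrad : 1 - (pA - pB) / 2 < ∏ i, max (1 - |α i| / (b - a)) 0) :
    ∀ k, k ≠ kA → g₁ k < g₁ kA := by
  have hba : (0:ℝ) < b - a := sub_pos.2 hab
  haveI hprob1 : IsProbabilityMeasure (unifMeas a b) := unif_prob a b hab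
  haveI hprob : IsProbabilityMeasure P := by rw [hP]; infer_instance
  set ρ : ℝ := ∏ i, max (1 - |α i| / (b - a)) 0 with hρ
  set c : Fin m → ℝ := fun i => max a (a + α i) with hc
  set d : Fin m → ℝ := fun i => min b (b + α i) with hd
  have hac : ∀ i, a ≤ c i := fun i => le_max_left _ _
  have hdb : ∀ i, d i ≤ b := fun i => min_le_left _ _
  have hac' : ∀ i, a ≤ c i - α i := fun i => by
    have := le_max_right a (a + α i); simp only [hc]; linarith [le_max_right a (a + α i)]
  have hdb' : ∀ i, d i - α i ≤ b := fun i => by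
    simp only [hd]; linarith [min_le_right b (b + α i)]
  have hlen : ∀ i, d i - c i = b - a - |α i| := by
    intro i
    rcases le_total 0 (α i) with h'|h'
    · rw [abs_of_nonneg h']
      simp only [hc, hd]
      rw [min_eq_left (by linarith), max_eq_right (by linarith)]; ring
    · rw [abs_of_nonpos h']
      simp only [hc, hd]
      rw [min_eq_right (by linarith), max_eq_left (by linarith)]; ring
  set S : Set (Fin m → ℝ) := Set.pi Set.univ fun i => Set.Icc (c i) (d i) with hS
  set S' : Set (Fin m → ℝ) := Set.pi Set.univ fun i => Set.Icc (c i - α i) (d i - α i) with hS'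
  have hSm : MeasurableSet S := MeasurableSet.univ_pi fun i => measurableSet_Icc
  have hS'm : MeasurableSet S' := MeasurableSet.univ_pi fun i => measurableSet_Icc
  have hfactor : ∀ (r : ℝ),
      ((ENNReal.ofReal (b - a))⁻¹ * ENNReal.ofReal (b - a - |r|)).toReal
        = max (1 - |r| / (b - a)) 0 := by
    intro r
    rw [ENNReal.toReal_mul, ENNReal.toReal_inv, ENNReal.toReal_ofReal hba.le,
      ENNReal.toReal_ofReal']
    rcases le_total (b - a - |r|) 0 with h'|h'
    · rw [max_eq_right h', max_eq_right, mul_zero]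
      have : 1 ≤ |r| / (b - a) := (one_le_div hba).2 (by linarith)
      linarith
    · rw [max_eq_left h', max_eq_left]
      · field_simp
      · have : |r| / (b - a) ≤ 1 := (div_le_one hba).2 (by linarith)
        linarith
  have hPS : (P S).toReal = ρ := by
    rw [hP, hS, Measure.pi_pi, ENNReal.toReal_prod, hρ]
    refine Finset.prod_congr rfl fun i _ => ?_
    rw [unif_Icc_apply a b _ _ hab (hac i) (hdb i), hlen i, hfactor]
  have hPS' : (P S').toReal = ρ := by
    rw [hP, hS', Measure.pi_pi, ENNReal.toReal_prod, hρ]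
    refine Finset.prod_congr rfl fun i _ => ?_
    rw [unif_Icc_apply a b _ _ hab (hac' i) (hdb' i),
      show d i - α i - (c i - α i) = b - a - |α i| by rw [← hlen i]; ring, hfactor]
  have hmap : Measure.map (fun z => α + z) (P.restrict S') = P.restrict S := by
    rw [hP, hS, hS', ← my_pi_restrict, ← my_pi_restrict]
    exact (measurePreserving_pi
      (fun i => (unifMeas a b).restrict (Set.Icc (c i - α i) (d i - α i)))
      (fun i => (unifMeas a b).restrict (Set.Icc (c i) (d i)))
      (fun i => ⟨measurable_const_add (α i),
        map_unif_restrict a b (α i) (c i) (d i) (hac i) (hdb i) (hac' i) (hdb' i)⟩)).map_eq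
  have h0 : ∀ z k, 0 ≤ h (φ x z) k := fun z k => (hhb _ k).1
  have h1 : ∀ z k, h (φ x z) k ≤ 1 := fun z k => (hhb _ k).2
  have hint : ∀ k, Integrable (fun z => h (φ x z) k) P := fun k =>
    (integrable_const (1:ℝ)).mono' (hmeas k).aestronglyMeasurable
      (Filter.Eventually.of_forall fun z => by
        rw [Real.norm_eq_abs, abs_of_nonneg (h0 z k)]; exact h1 z k)
  have hmeas' : ∀ k, Measurable fun z : Fin m → ℝ => h (φ x (α + z)) k := fun k =>
    (hmeas k).comp (measurable_const_add α)
  have hint' : ∀ k, Integrable (fun z => h (φ x (α + z)) k) P := fun k =>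
    (integrable_const (1:ℝ)).mono' (hmeas' k).aestronglyMeasurable
      (Filter.Eventually.of_forall fun z => by
        rw [Real.norm_eq_abs, abs_of_nonneg (h0 _ k)]; exact h1 _ k)
  have key : ∀ k, ∫ z in S', h (φ x (α + z)) k ∂P = ∫ z in S, h (φ x z) k ∂P := by
    intro k
    rw [← hmap, integral_map (measurable_const_add α).aemeasurable
      (hmeas k).aestronglyMeasurable]
  have hcompl : ∀ (T : Set (Fin m → ℝ)), MeasurableSet T → (P T).toReal = ρ →
      (P Tᶜ).toReal = 1 - ρ := by
    intro T hT hTρ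
    rw [measure_compl hT (measure_ne_top P T), measure_univ,
      ENNReal.toReal_sub_of_le prob_le_one ENNReal.one_ne_top, ENNReal.toReal_one, hTρ]
  have hbound : ∀ (f : (Fin m → ℝ) → ℝ) (T : Set (Fin m → ℝ)), MeasurableSet T →
      Integrable f P → (∀ z, f z ≤ 1) → ∫ z in T, f z ∂P ≤ (P T).toReal := by
    intro f T hT hfi hf1
    calc ∫ z in T, f z ∂P ≤ ∫ _ in T, (1:ℝ) ∂P :=
          setIntegral_mono hfi.integrableOn (integrableOn_const (measure_ne_top P T))
            hf1
      _ = (P T).toReal := by rw [setIntegral_const, smul_eq_mul, mul_one]; rfl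
  intro k hk
  -- lower bound for g₁ kA
  have low₁ : ∫ z in S, h (φ x z) kA ∂P ≤ g₁ kA := by
    rw [hg₁, ← key kA]
    exact setIntegral_le_integral (hint' kA) (Filter.Eventually.of_forall fun z => h0 _ kA)
  have upS : g₀ kA ≤ ∫ z in S, h (φ x z) kA ∂P + (1 - ρ) := by
    rw [hg₀]; rw [show (fun k => ∫ z, h (φ x z) k ∂P) kA = ∫ z, h (φ x z) kA ∂P from rfl, ← integral_add_compl hSm (hint kA)]
    have := hbound (fun z => h (φ x z) kA) Sᶜ hSm.compl (hint kA) (fun z => h1 z kA)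
    rw [hcompl S hSm hPS] at this
    exact add_le_add_right this _
  -- upper bound for g₁ k
  have up₁ : g₁ k ≤ ∫ z in S, h (φ x z) k ∂P + (1 - ρ) := by
    rw [hg₁]; rw [show (fun k => ∫ z, h (φ x (α + z)) k ∂P) k = ∫ z, h (φ x (α + z)) k ∂P from rfl, ← integral_add_compl hS'm (hint' k), key k]
    have := hbound (fun z => h (φ x (α + z)) k) S'ᶜ hS'm.compl (hint' k) (fun z => h1 _ k)
    rw [hcompl S' hS'm hPS'] at this
    exact add_le_add_right this _
  have lowS : ∫ z in S, h (φ x z) k ∂P ≤ g₀ k := by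
    rw [hg₀]
    exact setIntegral_le_integral (hint k) (Filter.Eventually.of_forall fun z => h0 _ k)
  have hBk := hconfB k hk
  linarith
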